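/- Let m ≥ 1 and let B : [0,∞) → ℝ^{m×m} be continuous and bounded. Suppose M : [0,∞) → ℝ^{m×m} is differentiable and satisfies M'(t) = −M(t)B(t) − B(t)ᵀM(t) with M(0) = M₀ symmetric positive definite. Then M(t) is symmetric and positive definite for every t ≥ 0. -/

import Mathlib

open Matrix Set


/-- Determinant of a column replacement as a permutation sum. -/
lemma det_updateColumn_perm_sum {m : ℕ} (A : Matrix (Fin m) (Fin m) ℝ) (i : Fin m)
    (c : Fin m → ℝ) :
    (A.updateCol i c).det
      = ∑ σ : Equiv.Perm (Fin m), Equiv.Perm.sign σ •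
          (c (σ i) * ∏ j ∈ Finset.univ.erase i, A (σ j) j) := by
  rw [Matrix.det_apply]
  refine Finset.sum_congr rfl fun σ _ => ?_
  congr 1
  rw [← Finset.mul_prod_erase Finset.univ _ (Finset.mem_univ i)]
  congr 1
  · simp [Matrix.updateCol_self]
  · exact Finset.prod_congr rfl fun j hj =>
      Matrix.updateCol_ne (Finset.ne_of_mem_erase hj)

/-- Jacobi's formula, `HasDerivWithinAt` version, from entrywise derivatives. -/
lemma hasDerivWithinAt_det {m : ℕ} {f : ℝ → Matrix (Fin m) (Fin m) ℝ}
    {f' : Matrix (Fin m) (Fin m) ℝ} {s : Set ℝ} {t : ℝ}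
    (h : ∀ i j, HasDerivWithinAt (fun u => f u i j) (f' i j) s t) :
    HasDerivWithinAt (fun u => (f u).det)
      (Matrix.trace (f' * (f t).adjugate)) s t := by
  have main : HasDerivWithinAt (fun u => (f u).det)
      (∑ σ : Equiv.Perm (Fin m), ((Equiv.Perm.sign σ : ℤ) : ℝ) *
        (∑ i, (∏ j ∈ Finset.univ.erase i, f t (σ j) j) • f' (σ i) i)) s t := by
    simp only [Matrix.det_apply']
    exact HasDerivWithinAt.fun_sum fun σ _ =>
      (HasDerivWithinAt.fun_finsetProd (fun i _ => h (σ i) i)).const_mul _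
  convert main using 1
  have key : ∀ i : Fin m,
      (∑ σ : Equiv.Perm (Fin m), Equiv.Perm.sign σ •
        ((∏ j ∈ Finset.univ.erase i, f t (σ j) j) * f' (σ i) i))
      = ((f t).adjugate *ᵥ (fun r => f' r i)) i := by
    intro i
    rw [← Matrix.cramer_eq_adjugate_mulVec, Matrix.cramer_apply,
      det_updateColumn_perm_sum]
    refine Finset.sum_congr rfl fun σ _ => ?_
    rw [mul_comm (f' (σ i) i)]
  calc Matrix.trace (f' * (f t).adjugate)
      = ∑ i, ((f t).adjugate *ᵥ (fun r => f' r i)) i := by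
        rw [Matrix.trace_mul_comm]
        simp [Matrix.trace, Matrix.diag, Matrix.mul_apply, Matrix.mulVec, dotProduct]
    _ = ∑ i, (∑ σ : Equiv.Perm (Fin m), Equiv.Perm.sign σ •
        ((∏ j ∈ Finset.univ.erase i, f t (σ j) j) * f' (σ i) i)) := by
        simp [key]
    _ = _ := by
        rw [Finset.sum_comm]
        refine Finset.sum_congr rfl fun σ _ => ?_
        rw [Finset.mul_sum]
        refine Finset.sum_congr rfl fun i _ => ?_
        simp only [Units.smul_def, zsmul_eq_mul, smul_eq_mul]
        try ring

/-- The trace identity: `tr((−A·Bt − Btᵀ·A)·adj A) = −2 tr(Bt) det A`. -/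
lemma trace_mul_adjugate_eq {m : ℕ} (A Bt : Matrix (Fin m) (Fin m) ℝ) :
    Matrix.trace ((-(A * Bt) - Btᵀ * A) * A.adjugate)
      = -2 * Matrix.trace Bt * A.det := by
  have h1 : Matrix.trace ((A * Bt) * A.adjugate) = A.det * Matrix.trace Bt := by
    rw [Matrix.mul_assoc, Matrix.trace_mul_comm, Matrix.mul_assoc,
      Matrix.adjugate_mul, Matrix.mul_smul, Matrix.mul_one, Matrix.trace_smul]
    simp [smul_eq_mul]
  have h2 : Matrix.trace ((Btᵀ * A) * A.adjugate) = A.det * Matrix.trace Bt := by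
    rw [Matrix.mul_assoc, Matrix.mul_adjugate, Matrix.mul_smul, Matrix.mul_one,
      Matrix.trace_smul, Matrix.trace_transpose]
    simp [smul_eq_mul]
  rw [Matrix.sub_mul, Matrix.neg_mul, Matrix.trace_sub, Matrix.trace_neg, h1, h2]
  ring

/-- If `M' = −M B − Bᵀ M` with `B` continuous and bounded and `M(0) = M₀` symmetric
positive definite, then `M(t)` is symmetric positive definite for all `t ≥ 0`. -/
theorem matrix_ode_posDef_special {m : ℕ} (hm : 1 ≤ m)
    (B : ℝ → Matrix (Fin m) (Fin m) ℝ)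
    (M : ℝ → Matrix (Fin m) (Fin m) ℝ) (M₀ : Matrix (Fin m) (Fin m) ℝ)
    (hBcont : ∀ i j, Continuous (fun t => B t i j))
    (hBbdd : ∃ C : ℝ, ∀ t ≥ (0:ℝ), ∀ i j, |B t i j| ≤ C)
    (hode : ∀ t ≥ (0:ℝ), ∀ i j, HasDerivWithinAt (fun s => M s i j)
      ((-(M t * B t) - (B t)ᵀ * M t) i j) (Set.Ici 0) t)
    (hM0 : M 0 = M₀)
    (hM₀symm : M₀.IsSymm) (hM₀pos : M₀.PosDef) :
    ∀ t ≥ (0:ℝ), (M t).IsSymm ∧ (M t).PosDef := by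
  obtain ⟨C, hC⟩ := hBbdd
  set C₀ : ℝ := max C 0 with hC₀def
  have hC₀nonneg : (0:ℝ) ≤ C₀ := le_max_right _ _
  -- truncated coefficient matrix, bounded and continuous on all of ℝ
  set Bt : ℝ → Matrix (Fin m) (Fin m) ℝ := fun t => B (max t 0) with hBtdef
  have hBtbdd : ∀ t i j, |Bt t i j| ≤ C₀ :=
    fun t i j => (hC (max t 0) (le_max_right _ _) i j).trans (le_max_left _ _)
  have hBteq : ∀ t ≥ (0:ℝ), Bt t = B t := fun t ht => by
    simp [hBtdef, max_eq_left ht]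
  -- the (globally Lipschitz) vector field on `Fin m → Fin m → ℝ`
  set v : ℝ → (Fin m → Fin m → ℝ) → (Fin m → Fin m → ℝ) :=
    fun t X i j => -(∑ k, X i k * Bt t k j) - ∑ k, Bt t k i * X k j with hvdef
  set K : NNReal := ⟨2 * m * C₀, by positivity⟩ with hKdef
  have hvnorm : ∀ t (Z : Fin m → Fin m → ℝ), ‖v t Z‖ ≤ (K : ℝ) * ‖Z‖ := by
    intro t Z
    have hZ : ∀ a b, |Z a b| ≤ ‖Z‖ := by
      intro a b
      calc |Z a b| = ‖Z a b‖ := (Real.norm_eq_abs _).symm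
        _ ≤ ‖Z a‖ := norm_le_pi_norm (Z a) b
        _ ≤ ‖Z‖ := norm_le_pi_norm Z a
    have hKnn : (0:ℝ) ≤ (K : ℝ) * ‖Z‖ := by positivity
    rw [pi_norm_le_iff_of_nonneg hKnn]
    intro i
    rw [pi_norm_le_iff_of_nonneg hKnn]
    intro j
    rw [Real.norm_eq_abs]
    have h1 : |∑ k, Z i k * Bt t k j| ≤ (m : ℝ) * (‖Z‖ * C₀) := by
      calc |∑ k, Z i k * Bt t k j| ≤ ∑ k, |Z i k * Bt t k j| := Finset.abs_sum_le_sum_abs _ _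
        _ ≤ ∑ _k : Fin m, ‖Z‖ * C₀ := by
            refine Finset.sum_le_sum fun k _ => ?_
            rw [abs_mul]
            exact mul_le_mul (hZ i k) (hBtbdd t k j) (abs_nonneg _) (norm_nonneg _)
        _ = (m : ℝ) * (‖Z‖ * C₀) := by simp [Finset.sum_const, nsmul_eq_mul]
    have h2 : |∑ k, Bt t k i * Z k j| ≤ (m : ℝ) * (‖Z‖ * C₀) := by
      calc |∑ k, Bt t k i * Z k j| ≤ ∑ k, |Bt t k i * Z k j| := Finset.abs_sum_le_sum_abs _ _
        _ ≤ ∑ _k : Fin m, ‖Z‖ * C₀ := by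
            refine Finset.sum_le_sum fun k _ => ?_
            rw [abs_mul, mul_comm]
            exact mul_le_mul (hZ k j) (hBtbdd t k i) (abs_nonneg _) (norm_nonneg _)
        _ = (m : ℝ) * (‖Z‖ * C₀) := by simp [Finset.sum_const, nsmul_eq_mul]
    calc |v t Z i j| ≤ |∑ k, Z i k * Bt t k j| + |∑ k, Bt t k i * Z k j| := by
          simp only [hvdef]
          exact (abs_sub _ _).trans (by rw [abs_neg])
      _ ≤ (m : ℝ) * (‖Z‖ * C₀) + (m : ℝ) * (‖Z‖ * C₀) := add_le_add h1 h2
      _ = (K : ℝ) * ‖Z‖ := by rw [hKdef]; show _ = 2 * (m:ℝ) * C₀ * ‖Z‖; ring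
  have hvlin : ∀ t (X Y : Fin m → Fin m → ℝ), v t X - v t Y = v t (X - Y) := by
    intro t X Y
    funext i j
    simp only [hvdef, Pi.sub_apply, sub_mul, mul_sub, Finset.sum_sub_distrib]
    ring
  have hvlip : ∀ t, LipschitzWith K (v t) := by
    intro t
    refine LipschitzWith.of_dist_le_mul fun X Y => ?_
    rw [dist_eq_norm, dist_eq_norm, hvlin]
    exact hvnorm t (X - Y)
  -- the solution as a function into the pi type
  set F : ℝ → (Fin m → Fin m → ℝ) := fun t i j => M t i j with hFdef
  have hF' : ∀ t ≥ (0:ℝ), HasDerivWithinAt F (v t (F t)) (Set.Ici 0) t := by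
    intro t ht
    rw [hasDerivWithinAt_pi]
    intro i
    rw [hasDerivWithinAt_pi]
    intro j
    refine (hode t ht i j).congr_deriv ?_
    simp only [hvdef, hFdef, Matrix.sub_apply, Matrix.neg_apply, Matrix.mul_apply,
      Matrix.transpose_apply, hBteq t ht]
  -- the transposed solution
  set G : ℝ → (Fin m → Fin m → ℝ) := fun t i j => M t j i with hGdef
  have hG' : ∀ t ≥ (0:ℝ), HasDerivWithinAt G (v t (G t)) (Set.Ici 0) t := by
    intro t ht
    rw [hasDerivWithinAt_pi]
    intro i
    rw [hasDerivWithinAt_pi]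
    intro j
    refine (hode t ht j i).congr_deriv ?_
    simp only [hvdef, hGdef, Matrix.sub_apply, Matrix.neg_apply, Matrix.mul_apply,
      Matrix.transpose_apply, hBteq t ht]
    rw [Finset.sum_congr rfl (fun k _ => mul_comm (M t k i) (B t k j)),
      Finset.sum_congr rfl (fun k _ => mul_comm (B t k i) (M t j k))]
    ring
  have hsymm : ∀ t ≥ (0:ℝ), (M t).IsSymm := by
    intro T hT
    have heq : Set.EqOn F G (Set.Icc 0 T) := by
      refine ODE_solution_unique hvlip
        (fun t ht => ((hF' t ht.1).continuousWithinAt).mono Set.Icc_subset_Ici_self)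
        (fun t ht => (hF' t ht.1).mono (Set.Ici_subset_Ici.mpr ht.1))
        (fun t ht => ((hG' t ht.1).continuousWithinAt).mono Set.Icc_subset_Ici_self)
        (fun t ht => (hG' t ht.1).mono (Set.Ici_subset_Ici.mpr ht.1)) ?_
      funext i j
      simp only [hFdef, hGdef, hM0]
      exact (hM₀symm.apply i j).symm
    have hFT := heq (Set.right_mem_Icc.mpr hT)
    ext i j
    rw [Matrix.transpose_apply]
    exact (congrFun (congrFun hFT i) j).symm
  -- determinant ODE
  set c : ℝ → ℝ := fun t => -2 * Matrix.trace (Bt t) with hcdef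
  have htr : (fun t => Matrix.trace (Bt t)) = fun t => ∑ i, B (max t 0) i i := by
    funext t
    simp [Matrix.trace, Matrix.diag, hBtdef]
  have hcc : Continuous c := by
    refine continuous_const.mul ?_
    rw [htr]
    exact continuous_finset_sum _ fun i _ =>
      (hBcont i i).comp (continuous_id.max continuous_const)
  have hcbdd : ∀ t, |c t| ≤ (K : ℝ) := by
    intro t
    have : |Matrix.trace (Bt t)| ≤ (m : ℝ) * C₀ := by
      rw [congrFun htr t]
      calc |∑ i, B (max t 0) i i| ≤ ∑ i, |B (max t 0) i i| := Finset.abs_sum_le_sum_abs _ _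
        _ ≤ ∑ _i : Fin m, C₀ := Finset.sum_le_sum fun i _ => hBtbdd t i i
        _ = (m : ℝ) * C₀ := by simp [Finset.sum_const, nsmul_eq_mul]
    calc |c t| = 2 * |Matrix.trace (Bt t)| := by rw [hcdef, abs_mul]; norm_num
      _ ≤ 2 * ((m : ℝ) * C₀) := by linarith
      _ = (K : ℝ) := by rw [hKdef]; show _ = 2 * (m:ℝ) * C₀; ring
  set w : ℝ → ℝ → ℝ := fun t x => c t * x with hwdef
  have hwlip : ∀ t, LipschitzWith K (w t) := by
    intro t
    refine LipschitzWith.of_dist_le_mul fun x y => ?_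
    rw [dist_eq_norm, dist_eq_norm, hwdef]
    simp only [← mul_sub]
    rw [Real.norm_eq_abs, Real.norm_eq_abs, abs_mul]
    exact mul_le_mul_of_nonneg_right (hcbdd t) (abs_nonneg _)
  have hd' : ∀ t ≥ (0:ℝ), HasDerivWithinAt (fun u => (M u).det)
      (c t * (M t).det) (Set.Ici 0) t := by
    intro t ht
    have h := hasDerivWithinAt_det (fun i j => hode t ht i j)
    have heq : Matrix.trace ((-(M t * B t) - (B t)ᵀ * M t) * (M t).adjugate)
        = c t * (M t).det := by
      rw [trace_mul_adjugate_eq, hcdef]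
      simp only []
      rw [hBteq t ht]
    rwa [heq] at h
  set g : ℝ → ℝ := fun t => M₀.det * Real.exp (∫ s in (0:ℝ)..t, c s) with hgdef
  have hg' : ∀ t : ℝ, HasDerivAt g (c t * g t) t := by
    intro t
    have hint : HasDerivAt (fun u => ∫ s in (0:ℝ)..u, c s) (c t) t :=
      intervalIntegral.integral_hasDerivAt_right (hcc.intervalIntegrable _ _)
        (hcc.stronglyMeasurableAtFilter _ _) hcc.continuousAt
    have h2 := hint.exp.const_mul M₀.det
    refine h2.congr_deriv ?_
    rw [hgdef]
    ring
  have hdet : ∀ T ≥ (0:ℝ), 0 < (M T).det := by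
    intro T hT
    have heq : Set.EqOn (fun u => (M u).det) g (Set.Icc 0 T) := by
      refine ODE_solution_unique hwlip
        (fun t ht => ((hd' t ht.1).continuousWithinAt).mono Set.Icc_subset_Ici_self)
        (fun t ht => (hd' t ht.1).mono (Set.Ici_subset_Ici.mpr ht.1))
        (fun t _ => (hg' t).continuousAt.continuousWithinAt)
        (fun t _ => (hg' t).hasDerivWithinAt) ?_
      simp [hgdef, hM0]
    have hT' := heq (Set.right_mem_Icc.mpr hT)
    rw [show (fun u => (M u).det) T = (M T).det from rfl] at hT'
    rw [hT', hgdef]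
    exact mul_pos hM₀pos.det_pos (Real.exp_pos _)
  have hMcont : ∀ i j, ContinuousOn (fun s => M s i j) (Set.Ici 0) :=
    fun i j t ht => (hode t ht i j).continuousWithinAt
  haveI : Nonempty (Fin m) := ⟨⟨0, hm⟩⟩
  -- continuous extension of the entries to all of ℝ
  set Mc : ℝ → Matrix (Fin m) (Fin m) ℝ := fun t => M (max t 0) with hMcdef
  have hMceq : ∀ t ≥ (0:ℝ), Mc t = M t := fun t ht => by simp [hMcdef, max_eq_left ht]
  have hMccont : ∀ i j, Continuous fun t => Mc t i j := fun i j =>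
    (hMcont i j).comp_continuous (continuous_id.max continuous_const)
      (fun t => Set.mem_Ici.mpr (le_max_right _ _))
  -- the quadratic form
  set q : ℝ → (Fin m → ℝ) → ℝ := fun t x => ∑ i, ∑ j, x i * Mc t i j * x j with hqdef
  have hq : Continuous ↿q := by
    show Continuous fun p : ℝ × (Fin m → ℝ) => ∑ i, ∑ j, p.2 i * Mc p.1 i j * p.2 j
    refine continuous_finset_sum _ fun i _ => continuous_finset_sum _ fun j _ => ?_
    exact (((continuous_apply i).comp continuous_snd).mul
      ((hMccont i j).comp continuous_fst)).mul ((continuous_apply j).comp continuous_snd)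
  have hqt : ∀ t, Continuous (q t) := fun t => hq.comp (Continuous.prodMk_right t)
  -- relation to the dot product
  have hqdot : ∀ t ≥ (0:ℝ), ∀ x, q t x = x ⬝ᵥ (M t *ᵥ x) := by
    intro t ht x
    rw [hqdef]
    simp only [hMceq t ht, dotProduct, Matrix.mulVec, Finset.mul_sum]
    exact Finset.sum_congr rfl fun i _ => Finset.sum_congr rfl fun j _ => by ring
  -- scaling
  have hqscale : ∀ t (a : ℝ) x, q t (a • x) = a ^ 2 * q t x := by
    intro t a x
    rw [hqdef]
    simp only [Pi.smul_apply, smul_eq_mul, Finset.mul_sum]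
    exact Finset.sum_congr rfl fun i _ => Finset.sum_congr rfl fun j _ => by ring
  set S : Set (Fin m → ℝ) := Metric.sphere 0 1 with hSdef
  have hScomp : IsCompact S := isCompact_sphere _ _
  have hSne : S.Nonempty := by
    refine ⟨fun _ => 1, ?_⟩
    simp [hSdef, mem_sphere_iff_norm]
  have hSnorm : ∀ x ∈ S, ‖x‖ = 1 := by
    intro x hx
    rwa [hSdef, mem_sphere_iff_norm, sub_zero] at hx
  have hSne0 : ∀ x ∈ S, x ≠ 0 := by
    intro x hx h0
    have := hSnorm x hx
    rw [h0] at this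
    simp at this
  -- the minimum of the quadratic form on the sphere
  set f : ℝ → ℝ := fun t => sInf (q t '' S) with hfdef
  have hfc : Continuous f := hScomp.continuous_sInf hq
  have hmin : ∀ t, ∃ x ∈ S, f t = q t x ∧ ∀ y ∈ S, q t x ≤ q t y := by
    intro t
    obtain ⟨x, hxS, hx, hle⟩ :=
      hScomp.exists_sInf_image_eq_and_le hSne (hqt t).continuousOn
    exact ⟨x, hxS, hx, hle⟩
  have hlb : ∀ t, ∀ y ∈ S, f t ≤ q t y := by
    intro t y hy
    exact csInf_le (hScomp.image (hqt t)).bddBelow (Set.mem_image_of_mem _ hy)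
  -- f never vanishes on t ≥ 0
  have hne : ∀ t ≥ (0:ℝ), f t ≠ 0 := by
    intro t ht h0
    obtain ⟨x, hxS, hfx, _⟩ := hmin t
    have hherm : (M t).IsHermitian := by
      rw [Matrix.IsHermitian, Matrix.conjTranspose_eq_transpose_of_trivial]
      exact hsymm t ht
    have hpsd : (M t).PosSemidef := by
      refine Matrix.PosSemidef.of_dotProduct_mulVec_nonneg hherm fun y => ?_
      rw [star_trivial]
      rcases eq_or_ne y 0 with rfl | hy0
      · simp
      · have hyS : (‖y‖⁻¹ • y) ∈ S := by
          rw [hSdef, mem_sphere_iff_norm, sub_zero, norm_smul, norm_inv, norm_norm,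
            inv_mul_cancel₀ (norm_ne_zero_iff.mpr hy0)]
        have h1 : 0 ≤ q t (‖y‖⁻¹ • y) := h0 ▸ hlb t _ hyS
        rw [hqscale] at h1
        have hyn : ‖y‖ ≠ 0 := norm_ne_zero_iff.mpr hy0
        have h2 : (0:ℝ) < ‖y‖⁻¹ ^ 2 := by positivity
        have h3 : 0 ≤ q t y := by nlinarith [h1, h2]
        rwa [hqdot t ht] at h3
    have hzero : M t *ᵥ x = 0 := by
      have := (hpsd.dotProduct_mulVec_zero_iff x).mp ?_
      · exact this
      · rw [star_trivial, ← hqdot t ht, ← hfx, h0]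
    have : (M t).det = 0 :=
      (Matrix.exists_mulVec_eq_zero_iff).mp ⟨x, hSne0 x hxS, hzero⟩
    exact absurd this (ne_of_gt (hdet t ht))
  have hf0 : 0 < f 0 := by
    obtain ⟨x, hxS, hfx, _⟩ := hmin 0
    rw [hfx, hqdot 0 le_rfl, hM0]
    have := hM₀pos.dotProduct_mulVec_pos (hSne0 x hxS)
    rwa [star_trivial] at this
  have hfpos : ∀ t ≥ (0:ℝ), 0 < f t := by
    intro t ht
    by_contra hle
    push_neg at hle
    have hlt : f t < 0 := lt_of_le_of_ne hle (hne t ht)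
    have h0mem : (0:ℝ) ∈ Set.Icc (f t) (f 0) := ⟨le_of_lt hlt, le_of_lt hf0⟩
    obtain ⟨s, hs, hfs⟩ := intermediate_value_Icc' ht hfc.continuousOn h0mem
    exact hne s hs.1 hfs
  -- conclusion
  intro t ht
  refine ⟨hsymm t ht, ?_⟩
  have hherm : (M t).IsHermitian := by
    rw [Matrix.IsHermitian, Matrix.conjTranspose_eq_transpose_of_trivial]
    exact hsymm t ht
  refine Matrix.PosDef.of_dotProduct_mulVec_pos hherm fun x hx0 => ?_
  rw [star_trivial, ← hqdot t ht]
  have hxS : (‖x‖⁻¹ • x) ∈ S := by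
    rw [hSdef, mem_sphere_iff_norm, sub_zero, norm_smul, norm_inv, norm_norm,
      inv_mul_cancel₀ (norm_ne_zero_iff.mpr hx0)]
  have h1 : 0 < q t (‖x‖⁻¹ • x) := lt_of_lt_of_le (hfpos t ht) (hlb t _ hxS)
  rw [hqscale] at h1
  have hxn : ‖x‖ ≠ 0 := norm_ne_zero_iff.mpr hx0
  have h2 : (0:ℝ) < ‖x‖⁻¹ ^ 2 := by positivity
  nlinarith [h1, h2]
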